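/- Let s ≥ 2 be an integer and suppose (j₁, j₂, …, j_{s/2}) are nonnegative integers (with s even) satisfying the polynomial identity (1 − t^{2^s})/(1 − t) = ∏_{i=1}^{s/2} (1 − t^{(2i−1)·2^{j_i}})/(1 − t^{2i−1}) in ℤ[t]. Then j₁ = s (and j_i = 0 for all i ≥ 2). In particular, no such tuple exists with j₁ < s. -/

import Mathlib

open Polynomial Finset

private lemma coeff_geom (N d m : ℕ) (hd : 0 < d) :
    (∑ l ∈ Finset.range N, (X : Polynomial ℤ) ^ (l * d)).coeff m
      = if d ∣ m ∧ m / d < N then 1 else 0 := by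
  rw [finset_sum_coeff]
  simp only [coeff_X_pow]
  split_ifs with h
  · obtain ⟨⟨c, rfl⟩, h2⟩ := h
    rw [Nat.mul_div_cancel_left c hd] at h2
    rw [Finset.sum_eq_single_of_mem c (Finset.mem_range.2 h2)]
    · rw [if_pos (mul_comm d c)]
    · intro l hl hne
      rw [if_neg]
      intro hEq
      exact hne (Nat.eq_of_mul_eq_mul_right hd (mul_comm d c ▸ hEq)).symm
  · apply Finset.sum_eq_zero
    intro l hl
    rw [if_neg]
    intro hEq
    exact h ⟨⟨l, by rw [hEq, mul_comm]⟩, by rw [hEq, Nat.mul_div_cancel _ hd]; exact Finset.mem_range.1 hl⟩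

private lemma prod_coeff_low (t : Finset ℕ) (p : ℕ → Polynomial ℤ) (M : ℕ)
    (h0 : ∀ k ∈ t, (p k).coeff 0 = 1)
    (h1 : ∀ k ∈ t, ∀ m, 1 ≤ m → m ≤ M → (p k).coeff m = 0) :
    (∏ k ∈ t, p k).coeff 0 = 1 ∧ ∀ m, 1 ≤ m → m ≤ M → (∏ k ∈ t, p k).coeff m = 0 := by
  induction t using Finset.cons_induction with
  | empty => exact ⟨by simp, fun m hm _ => by rw [Finset.prod_empty, coeff_one, if_neg (by omega)]⟩
  | cons a t ha ih =>
    have ih' := ih (fun k hk => h0 k (Finset.mem_cons_of_mem hk))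
      (fun k hk => h1 k (Finset.mem_cons_of_mem hk))
    rw [Finset.prod_cons]
    constructor
    · rw [mul_coeff_zero, h0 a (Finset.mem_cons_self _ _), ih'.1, one_mul]
    · intro m hm1 hmM
      rw [coeff_mul]
      apply Finset.sum_eq_zero
      intro x hx
      have hxy := Finset.HasAntidiagonal.mem_antidiagonal.1 hx
      rcases Nat.eq_zero_or_pos x.1 with h | h
      · rw [ih'.2 x.2 (by omega) (by omega), mul_zero]
      · rw [h1 a (Finset.mem_cons_self _ _) x.1 h (by omega), zero_mul]

private lemma coeff_mul_low (p q : Polynomial ℤ) (m : ℕ) (hq0 : q.coeff 0 = 1)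
    (hq : ∀ k, 1 ≤ k → k ≤ m → q.coeff k = 0) :
    (p * q).coeff m = p.coeff m := by
  rw [coeff_mul, Finset.sum_eq_single_of_mem (m, 0) (Finset.HasAntidiagonal.mem_antidiagonal.2 (by omega))]
  · rw [hq0, mul_one]
  · intro x hx hne
    have hxy := Finset.HasAntidiagonal.mem_antidiagonal.1 hx
    have : 1 ≤ x.2 := by
      by_contra hc
      exact hne (by ext <;> simp <;> omega)
    rw [hq x.2 this (by omega), mul_zero]

private lemma coeff_mul_special (p q : Polynomial ℤ) (m : ℕ) (hm : 0 < m)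
    (hq0 : q.coeff 0 = 1) (hqm : q.coeff m = 1)
    (hq : ∀ k, 1 ≤ k → k < m → q.coeff k = 0) :
    (p * q).coeff m = p.coeff m + p.coeff 0 := by
  rw [coeff_mul, Finset.Nat.sum_antidiagonal_eq_sum_range_succ_mk]
  rw [Finset.sum_congr rfl (g := fun k =>
      (if k = m then p.coeff m else 0) + (if k = 0 then p.coeff 0 else 0))]
  · rw [Finset.sum_add_distrib, Finset.sum_ite_eq' _ m, Finset.sum_ite_eq' _ 0,
      if_pos (Finset.mem_range.2 (by omega)), if_pos (Finset.mem_range.2 (by omega))]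
  · intro k hk
    have hk' := Finset.mem_range.1 hk
    rcases eq_or_ne k m with rfl | h1
    · rw [Nat.sub_self, hq0, mul_one, if_pos rfl, if_neg (by omega), add_zero]
    · rcases eq_or_ne k 0 with rfl | h0
      · rw [if_neg h1, if_pos rfl, Nat.sub_zero, hqm, mul_one, zero_add]
      · rw [hq (m - k) (by omega) (by omega), mul_zero, if_neg h1, if_neg h0, add_zero]

open Polynomial in
/-- if `s ≥ 2` is even and nonnegative integers `j₁, …, j_{s/2}`
satisfy the polynomial identity
`(1 − t^{2^s})/(1 − t) = ∏_{i=1}^{s/2} (1 − t^{(2i−1)·2^{j_i}})/(1 − t^{2i−1})`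
in `ℤ[t]` — each quotient written as the truncated geometric series it equals —
then `j₁ = s` and `j_i = 0` for all `i ≥ 2`.  Here `j i` (0-based `i`) is
`j_{i+1}`, the exponent attached to the odd number `d_{i+1} = 2i + 1`. -/
theorem stmt_3 (s : ℕ) (hs : 2 ≤ s) (hse : s % 2 = 0) (j : ℕ → ℕ)
    (h : ∏ i ∈ Finset.range (s / 2),
        (∑ l ∈ Finset.range (2 ^ j i), (X : Polynomial ℤ) ^ (l * (2 * i + 1)))
      = ∑ l ∈ Finset.range (2 ^ s), (X : Polynomial ℤ) ^ l) :
    j 0 = s ∧ ∀ i, 1 ≤ i → i < s / 2 → j i = 0 := by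
  have hslt : s < 2 ^ s := Nat.lt_two_pow_self (n := s)
  set F : ℕ → Polynomial ℤ :=
    fun k => ∑ l ∈ Finset.range (2 ^ j k), (X : Polynomial ℤ) ^ (l * (2 * k + 1)) with hF
  have hFcoeff : ∀ k m, (F k).coeff m
      = if (2 * k + 1) ∣ m ∧ m / (2 * k + 1) < 2 ^ j k then 1 else 0 := by
    intro k m
    rw [hF]
    exact coeff_geom _ _ _ (by omega)
  have hF0coeff : ∀ m, (F 0).coeff m = if m < 2 ^ j 0 then 1 else 0 := by
    intro m
    rw [hFcoeff 0 m]
    simp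
  have hRHS : ∀ m, m < 2 ^ s →
      (∑ l ∈ Finset.range (2 ^ s), (X : Polynomial ℤ) ^ l).coeff m = 1 := by
    intro m hm
    have he : (∑ l ∈ Finset.range (2 ^ s), (X : Polynomial ℤ) ^ l)
        = ∑ l ∈ Finset.range (2 ^ s), (X : Polynomial ℤ) ^ (l * 1) := by simp
    rw [he, coeff_geom _ _ _ one_pos, if_pos ⟨one_dvd m, by simpa using hm⟩]
  have h0mem : (0 : ℕ) ∈ Finset.range (s / 2) := Finset.mem_range.2 (by omega)
  have key : ∀ i, 1 ≤ i → i < s / 2 → j i = 0 := by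
    intro i
    induction i using Nat.strong_induction_on with
    | _ i ih =>
      intro hi1 hin
      by_contra hji
      have h2i1 : 2 * i + 1 < 2 ^ s := by omega
      have himem : i ∈ (Finset.range (s / 2)).erase 0 :=
        Finset.mem_erase.2 ⟨by omega, Finset.mem_range.2 hin⟩
      have hsplit : ∏ k ∈ Finset.range (s / 2), F k
          = F 0 * (F i * ∏ k ∈ ((Finset.range (s / 2)).erase 0).erase i, F k) := by
        rw [← Finset.mul_prod_erase _ F h0mem, ← Finset.mul_prod_erase _ F himem]
      set G := ∏ k ∈ ((Finset.range (s / 2)).erase 0).erase i, F k with hG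
      have hGfacts : G.coeff 0 = 1 ∧ ∀ m, 1 ≤ m → m ≤ 2 * i + 1 → G.coeff m = 0 := by
        apply prod_coeff_low
        · intro k hk
          rw [hFcoeff k 0, if_pos ⟨dvd_zero _, by rw [Nat.zero_div]; positivity⟩]
        · intro k hk m hm1 hm2
          obtain ⟨hki, hk0, hkr⟩ : k ≠ i ∧ k ≠ 0 ∧ k < s / 2 := by
            obtain ⟨h1, h2⟩ := Finset.mem_erase.1 hk
            obtain ⟨h3, h4⟩ := Finset.mem_erase.1 h2
            exact ⟨h1, h3, Finset.mem_range.1 h4⟩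
          rw [hFcoeff k m, if_neg]
          rintro ⟨hdvd, hlt⟩
          have hdm : 2 * k + 1 ≤ m := Nat.le_of_dvd (by omega) hdvd
          rcases lt_or_gt_of_ne hki with hk | hk
          · have hjk : j k = 0 := ih k hk (by omega) (by omega)
            rw [hjk, pow_zero, Nat.lt_one_iff, Nat.div_eq_zero_iff] at hlt
            omega
          · omega
      have Fi0 : (F i).coeff 0 = 1 := by
        rw [hFcoeff i 0, if_pos ⟨dvd_zero _, by rw [Nat.zero_div]; positivity⟩]
      have Filow : ∀ m, 1 ≤ m → m ≤ 2 * i → (F i).coeff m = 0 := by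
        intro m hm1 hm2
        rw [hFcoeff i m, if_neg]
        rintro ⟨hdvd, -⟩
        have := Nat.le_of_dvd (by omega) hdvd
        omega
      have Fitop : (F i).coeff (2 * i + 1) = 1 := by
        rw [hFcoeff i (2 * i + 1), if_pos]
        refine ⟨dvd_refl _, ?_⟩
        rw [Nat.div_self (by omega)]
        exact Nat.one_lt_two_pow_iff.2 hji
      have hQ0 : (F i * G).coeff 0 = 1 := by
        rw [mul_coeff_zero, Fi0, hGfacts.1, one_mul]
      have hQlow : ∀ m, 1 ≤ m → m ≤ 2 * i → (F i * G).coeff m = 0 := by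
        intro m hm1 hm2
        rw [coeff_mul_low _ _ m hGfacts.1 (fun k hk1 hk2 => hGfacts.2 k hk1 (by omega))]
        exact Filow m hm1 hm2
      have hQtop : (F i * G).coeff (2 * i + 1) = 1 := by
        rw [coeff_mul_low _ _ _ hGfacts.1 (fun k hk1 hk2 => hGfacts.2 k hk1 (by omega))]
        exact Fitop
      have hA : ∀ m, m ≤ 2 * i → (F 0).coeff m = 1 := by
        intro m hm
        have hc : (F 0 * (F i * G)).coeff m = 1 := by
          rw [← hsplit, h]
          exact hRHS m (by omega)
        rwa [coeff_mul_low _ _ m hQ0 (fun k hk1 hk2 => hQlow k hk1 (by omega))] at hc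
      have hA2i : 2 * i < 2 ^ j 0 := by
        by_contra hc
        have := hA (2 * i) le_rfl
        rw [hF0coeff, if_neg (by omega)] at this
        norm_num at this
      have hj0 : j 0 ≠ 0 := by
        intro h0
        rw [h0, pow_zero] at hA2i
        omega
      have h2dvd : 2 ∣ 2 ^ j 0 := dvd_pow_self 2 hj0
      have h2i1lt : 2 * i + 1 < 2 ^ j 0 := by
        obtain ⟨c, hc⟩ := h2dvd
        omega
      have hc : (F 0 * (F i * G)).coeff (2 * i + 1) = 1 := by
        rw [← hsplit, h]
        exact hRHS _ h2i1
      rw [coeff_mul_special _ _ (2 * i + 1) (by omega) hQ0 hQtop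
          (fun k hk1 hk2 => hQlow k hk1 (by omega)),
        hF0coeff, if_pos h2i1lt, hF0coeff, if_pos (by positivity)] at hc
      norm_num at hc
  refine ⟨?_, key⟩
  have hprod1 : ∏ k ∈ Finset.range (s / 2), F k = F 0 := by
    rw [← Finset.mul_prod_erase _ F h0mem, Finset.prod_eq_one, mul_one]
    intro k hk
    obtain ⟨hk0, hkr⟩ := Finset.mem_erase.1 hk
    rw [hF]
    simp only [key k (by omega) (Finset.mem_range.1 hkr), pow_zero]
    simp
  have heq : F 0 = ∑ l ∈ Finset.range (2 ^ s), (X : Polynomial ℤ) ^ l := by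
    rw [← hprod1]; exact h
  have hev := congrArg (Polynomial.eval 1) heq
  rw [hF] at hev
  simp only [Polynomial.eval_finset_sum, Polynomial.eval_pow, Polynomial.eval_X, one_pow,
    Finset.sum_const, Finset.card_range, nsmul_eq_mul, mul_one] at hev
  have : (2 : ℕ) ^ j 0 = 2 ^ s := by exact_mod_cast hev
  exact Nat.pow_right_injective (le_refl 2) this
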